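/- (Cross-fitting remainder bound.) Let W, W₁, …, Wₙ be i.i.d. random elements of a measurable space 𝒲, and let T be a random element of a measurable space 𝒯 that is independent of (W₁, …, Wₙ). Let φ : 𝒲 × 𝒯 → ℝ be jointly measurable and φ₀ : 𝒲 → ℝ be square-integrable, and suppose E[(φ(W, t) − φ₀(W))²] ≤ r² for every t ∈ 𝒯, where r ≥ 0. Then, writing Φ(t) := E[φ(W, t)], one has E[ ( n^{−1/2} Σ_{i=1}^n { (φ(Wᵢ, T) − Φ(T)) − (φ₀(Wᵢ) − E[φ₀(W)]) } )² | T ] ≤ r² almost surely; in particular the unconditional second moment of this normalized sum is at most r². -/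

import Mathlib

open MeasureTheory ProbabilityTheory

lemma auxA {Ω : Type*} [MeasurableSpace Ω] {μ : Measure Ω} [IsProbabilityMeasure μ]
    {Y Z : Ω → ℝ} (hY : Measurable Y) (hZ : Measurable Z) (hind : IndepFun Y Z μ)
    (hsum : MemLp (fun ω => Y ω + Z ω) 2 μ) : MemLp Y 2 μ := by
  have hjm : Measurable (fun ω => (Y ω, Z ω)) := hY.prodMk hZ
  have hprod : μ.map (fun ω => (Y ω, Z ω)) = (μ.map Y).prod (μ.map Z) :=
    (indepFun_iff_map_prod_eq_prod_map_map hY.aemeasurable hZ.aemeasurable).1 hind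
  haveI : IsProbabilityMeasure (μ.map Y) := Measure.isProbabilityMeasure_map hY.aemeasurable
  haveI : IsProbabilityMeasure (μ.map Z) := Measure.isProbabilityMeasure_map hZ.aemeasurable
  have hadd : MemLp (fun p : ℝ × ℝ => p.1 + p.2) 2 ((μ.map Y).prod (μ.map Z)) := by
    rw [← hprod, memLp_map_measure_iff (by fun_prop) hjm.aemeasurable]
    exact hsum
  have hsq : Integrable (fun p : ℝ × ℝ => (p.1 + p.2) ^ 2) ((μ.map Y).prod (μ.map Z)) := by
    have := (memLp_two_iff_integrable_sq hadd.aestronglyMeasurable).1 hadd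
    simpa using this
  have hae : ∀ᵐ z ∂(μ.map Z), Integrable (fun y => (y + z) ^ 2) (μ.map Y) :=
    hsq.prod_left_ae
  obtain ⟨z₀, hz₀⟩ := hae.exists
  have h1 : MemLp (fun y : ℝ => y + z₀) 2 (μ.map Y) :=
    (memLp_two_iff_integrable_sq (by fun_prop)).2 hz₀
  have h2 : MemLp (fun y : ℝ => y) 2 (μ.map Y) := by
    have h3 := h1.sub (memLp_const z₀)
    have : ((fun y : ℝ => y + z₀) - fun _ => z₀) = fun y : ℝ => y := by
      funext y; simp
    rwa [this] at h3
  exact (memLp_map_measure_iff aestronglyMeasurable_id hY.aemeasurable).1 h2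

lemma auxB {Ω 𝒲 : Type*} [MeasurableSpace Ω] [MeasurableSpace 𝒲]
    {μ : Measure Ω} [IsProbabilityMeasure μ] {n : ℕ} (hn : 0 < n)
    {W : Ω → 𝒲} {Ws : Fin n → Ω → 𝒲} (hWm : Measurable W) (hWsm : ∀ i, Measurable (Ws i))
    (hiid : iIndepFun Ws μ)
    (hlaw : ∀ i, μ.map (Ws i) = μ.map W)
    {ψ : 𝒲 → ℝ} (hψ : Measurable ψ) (m : ℝ)
    (hG : MemLp (fun ω => ∑ i, (ψ (Ws i ω) - m)) 2 μ) :
    MemLp (fun ω => ψ (W ω)) 2 μ := by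
  classical
  set i₀ : Fin n := ⟨0, hn⟩ with hi₀
  have hYm : ∀ i : Fin n, Measurable fun ω => ψ (Ws i ω) - m :=
    fun i => ((hψ.comp (hWsm i)).sub measurable_const)
  have hiidY : iIndepFun (fun i ω => ψ (Ws i ω) - m) μ :=
    hiid.comp (fun _ w => ψ w - m) (fun _ => hψ.sub measurable_const)
  have hind : IndepFun (fun ω => ψ (Ws i₀ ω) - m)
      (fun ω => ∑ j ∈ Finset.univ.erase i₀, (ψ (Ws j ω) - m)) μ := by
    have h := (hiidY.indepFun_finset_sum_of_notMem hYm
      (Finset.notMem_erase i₀ Finset.univ)).symm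
    have he : (∑ j ∈ Finset.univ.erase i₀, fun ω => ψ (Ws j ω) - m)
        = fun ω => ∑ j ∈ Finset.univ.erase i₀, (ψ (Ws j ω) - m) := by
      funext ω; simp [Finset.sum_apply]
    rwa [he] at h
  have hsum : MemLp (fun ω => (ψ (Ws i₀ ω) - m)
      + ∑ j ∈ Finset.univ.erase i₀, (ψ (Ws j ω) - m)) 2 μ := by
    have he : (fun ω => (ψ (Ws i₀ ω) - m) + ∑ j ∈ Finset.univ.erase i₀, (ψ (Ws j ω) - m))
        = fun ω => ∑ i, (ψ (Ws i ω) - m) := by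
      funext ω
      exact Finset.add_sum_erase _ (fun j => ψ (Ws j ω) - m) (Finset.mem_univ i₀)
    rw [he]; exact hG
  have h1 : MemLp (fun ω => ψ (Ws i₀ ω) - m) 2 μ :=
    auxA (hYm i₀) (Finset.measurable_sum _ fun j _ => hYm j) hind hsum
  have h2 : MemLp (fun ω => ψ (Ws i₀ ω)) 2 μ := by
    have h3 := h1.add (memLp_const m)
    have : ((fun ω => ψ (Ws i₀ ω) - m) + fun _ => m) = fun ω => ψ (Ws i₀ ω) := by
      funext ω; simp
    rwa [this] at h3
  have h4 : MemLp ψ 2 (μ.map W) := by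
    rw [← hlaw i₀]
    exact (memLp_map_measure_iff hψ.aestronglyMeasurable (hWsm i₀).aemeasurable).2 h2
  exact (memLp_map_measure_iff hψ.aestronglyMeasurable hWm.aemeasurable).1 h4

lemma auxC {Ω 𝒲 : Type*} [MeasurableSpace Ω] [MeasurableSpace 𝒲]
    {μ : Measure Ω} [IsProbabilityMeasure μ] {n : ℕ}
    {W : Ω → 𝒲} {Ws : Fin n → Ω → 𝒲} (hWm : Measurable W) (hWsm : ∀ i, Measurable (Ws i))
    (hiid : iIndepFun Ws μ)
    (hlaw : ∀ i, μ.map (Ws i) = μ.map W)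
    {ψ : 𝒲 → ℝ} (hψ : Measurable ψ) {r m : ℝ}
    (hψ2 : MemLp (fun ω => ψ (W ω)) 2 μ)
    (hm : m = ∫ ω, ψ (W ω) ∂μ)
    (hb : ∫ ω, (ψ (W ω)) ^ 2 ∂μ ≤ r ^ 2) :
    ∫ ω, (∑ i, (ψ (Ws i ω) - m)) ^ 2 ∂μ ≤ (n : ℝ) * r ^ 2 := by
  classical
  set Y : Fin n → Ω → ℝ := fun i ω => ψ (Ws i ω) - m with hYdef
  have hYm : ∀ i, Measurable (Y i) := fun i => (hψ.comp (hWsm i)).sub measurable_const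
  -- transfer of integrals along the common law
  have key : ∀ (i : Fin n) (f : 𝒲 → ℝ), Measurable f →
      ∫ ω, f (Ws i ω) ∂μ = ∫ ω, f (W ω) ∂μ := by
    intro i f hf
    rw [← integral_map (hWsm i).aemeasurable hf.aestronglyMeasurable, hlaw i,
      integral_map hWm.aemeasurable hf.aestronglyMeasurable]
  have hWsi2 : ∀ i, MemLp (fun ω => ψ (Ws i ω)) 2 μ := by
    intro i
    have h4 : MemLp ψ 2 (μ.map (Ws i)) := by
      rw [hlaw i]
      exact (memLp_map_measure_iff hψ.aestronglyMeasurable hWm.aemeasurable).2 hψ2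
    exact (memLp_map_measure_iff hψ.aestronglyMeasurable (hWsm i).aemeasurable).1 h4
  have hYi2 : ∀ i, MemLp (Y i) 2 μ := by
    intro i
    have h3 := (hWsi2 i).sub (memLp_const m)
    have : ((fun ω => ψ (Ws i ω)) - fun _ => m) = Y i := by funext ω; simp [hYdef]
    rwa [this] at h3
  have hEY : ∀ i, ∫ ω, Y i ω ∂μ = 0 := by
    intro i
    have : ∫ ω, Y i ω ∂μ = (∫ ω, ψ (Ws i ω) ∂μ) - ∫ ω, (fun _ => m) ω ∂μ :=
      integral_sub ((hWsi2 i).integrable one_le_two) (integrable_const m)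
    rw [this, key i ψ hψ, integral_const]
    simp [hm]
  -- variance of each summand
  have hψint : Integrable (fun ω => ψ (W ω)) μ := hψ2.integrable one_le_two
  have hψsqint : Integrable (fun ω => (ψ (W ω)) ^ 2) μ := by
    have := hψ2.integrable_sq
    simpa using this
  have hshift : ∫ ω, (ψ (W ω) - m) ^ 2 ∂μ ≤ r ^ 2 := by
    have hexp : (fun ω => (ψ (W ω) - m) ^ 2)
        = fun ω => ((ψ (W ω)) ^ 2 - (2 * m) * ψ (W ω)) + m ^ 2 := by
      funext ω; ring
    have hint1 : Integrable (fun ω => (ψ (W ω)) ^ 2 - (2 * m) * ψ (W ω)) μ := by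
      have := hψsqint.sub (hψint.const_mul (2 * m))
      exact this
    rw [hexp, integral_add hint1 (integrable_const _),
      integral_sub hψsqint (hψint.const_mul _), integral_const_mul, ← hm, integral_const]
    simp only [probReal_univ, ENNReal.toReal_one, smul_eq_mul, one_mul]
    nlinarith [sq_nonneg m]
  have hvari : ∀ i, variance (Y i) μ ≤ r ^ 2 := by
    intro i
    rw [variance_eq_sub (hYi2 i)]
    have h1 : μ[(Y i) ^ 2] = ∫ ω, (ψ (Ws i ω) - m) ^ 2 ∂μ := by
      congr 1
    have h2 : ∫ ω, (ψ (Ws i ω) - m) ^ 2 ∂μ = ∫ ω, (ψ (W ω) - m) ^ 2 ∂μ :=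
      key i (fun x => (ψ x - m) ^ 2) ((hψ.sub measurable_const).pow_const 2)
    rw [h1, h2, hEY i]
    simpa using hshift
  -- variance of the sum
  have hiidY : iIndepFun Y μ :=
    hiid.comp (fun _ w => ψ w - m) (fun _ => hψ.sub measurable_const)
  have hvarsum : variance (∑ i, Y i) μ = ∑ i, variance (Y i) μ :=
    IndepFun.variance_sum (fun i _ => hYi2 i)
      (fun i _ j _ hij => hiidY.indepFun hij)
  have hEsum : ∫ ω, (∑ i, Y i) ω ∂μ = 0 := by
    have : ∀ ω, (∑ i, Y i) ω = ∑ i, Y i ω := by intro ω; simp [Finset.sum_apply]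
    simp_rw [this]
    rw [integral_finset_sum _ (fun i _ => (hYi2 i).integrable one_le_two)]
    simp [hEY]
  have hsum2 : MemLp (∑ i, Y i) 2 μ := memLp_finset_sum' _ (fun i _ => hYi2 i)
  have hfinal : μ[(∑ i, Y i) ^ 2] ≤ (n : ℝ) * r ^ 2 := by
    have hv := variance_eq_sub hsum2
    have : μ[(∑ i, Y i) ^ 2] = variance (∑ i, Y i) μ := by
      rw [hv, hEsum]; simp
    rw [this, hvarsum]
    calc ∑ i, variance (Y i) μ ≤ ∑ _i : Fin n, r ^ 2 :=
          Finset.sum_le_sum fun i _ => hvari i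
      _ = (n : ℝ) * r ^ 2 := by simp [mul_comm]
  have heq : ∫ ω, (∑ i, (ψ (Ws i ω) - m)) ^ 2 ∂μ = μ[(∑ i, Y i) ^ 2] := by
    congr 1; funext ω; simp [hYdef, Finset.sum_apply]
  rw [heq]; exact hfinal

/-- Cross-fitting remainder bound: Let `W, W₁, …, Wₙ` be i.i.d. and `T` independent
of `(W₁, …, Wₙ)`. If `φ` is jointly measurable, `φ₀` is square-integrable, and
`E[(φ(W, t) − φ₀(W))²] ≤ r²` for every `t`, then with `Φ(t) := E[φ(W, t)]`,
`E[(n^{−1/2} Σᵢ {(φ(Wᵢ, T) − Φ(T)) − (φ₀(Wᵢ) − E[φ₀(W)])})² | T] ≤ r²` a.s.; in particular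
the unconditional second moment of this normalized sum is at most `r²`. -/
theorem stmt7
    {Ω 𝒲 𝒯 : Type*} [MeasurableSpace Ω] [MeasurableSpace 𝒲] [MeasurableSpace 𝒯]
    (μ : Measure Ω) [IsProbabilityMeasure μ]
    (n : ℕ) (hn : 0 < n)
    (W : Ω → 𝒲) (Ws : Fin n → Ω → 𝒲) (T : Ω → 𝒯)
    (hWm : Measurable W) (hWsm : ∀ i, Measurable (Ws i)) (hTm : Measurable T)
    (hiid : iIndepFun Ws μ)
    (hlaw : ∀ i, μ.map (Ws i) = μ.map W)
    (hindep : IndepFun (fun ω i => Ws i ω) T μ)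
    (φ : 𝒲 × 𝒯 → ℝ) (hφm : Measurable φ)
    (φ0 : 𝒲 → ℝ) (hφ0m : Measurable φ0)
    (hφ0sq : MemLp (fun ω => φ0 (W ω)) 2 μ)
    (r : ℝ) (hr : 0 ≤ r)
    (hbound : ∀ t, ∫ ω, (φ (W ω, t) - φ0 (W ω)) ^ 2 ∂μ ≤ r ^ 2)
    (Φ : 𝒯 → ℝ) (hΦ : ∀ t, Φ t = ∫ ω, φ (W ω, t) ∂μ)
    (S : Ω → ℝ)
    (hS : ∀ ω, S ω = (n : ℝ) ^ (-(1 : ℝ) / 2) *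
      ∑ i : Fin n,
        ((φ (Ws i ω, T ω) - Φ (T ω)) - (φ0 (Ws i ω) - ∫ ω', φ0 (W ω') ∂μ))) :
    (∀ᵐ ω ∂μ,
      (μ[fun ω' => (S ω') ^ 2 | MeasurableSpace.comap T inferInstance]) ω ≤ r ^ 2) ∧
    ∫ ω, (S ω) ^ 2 ∂μ ≤ r ^ 2 := by
  classical
  have hm_le : MeasurableSpace.comap T inferInstance ≤ ‹MeasurableSpace Ω› := hTm.comap_le
  by_cases hint : Integrable (fun ω => (S ω) ^ 2) μ
  swap
  · constructor
    · rw [condExp_of_not_integrable hint]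
      filter_upwards with ω
      simpa using sq_nonneg r
    · rw [integral_undef hint]
      positivity
  -- main case
  set c : ℝ := (n : ℝ) ^ (-(1 : ℝ) / 2) with hc
  have hnR : (0 : ℝ) < (n : ℝ) := by exact_mod_cast hn
  have hc2 : c ^ 2 = (n : ℝ)⁻¹ := by
    rw [hc, ← Real.rpow_natCast ((n : ℝ) ^ (-(1 : ℝ) / 2)) 2, ← Real.rpow_mul hnR.le]
    norm_num [Real.rpow_neg_one]
  set c0 : ℝ := ∫ ω, φ0 (W ω) ∂μ with hc0
  set Wv : Ω → (Fin n → 𝒲) := fun ω i => Ws i ω with hWv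
  have hWvm : Measurable Wv := measurable_pi_lambda _ hWsm
  set ξ : Ω → (Fin n → 𝒲) × 𝒯 := fun ω => (Wv ω, T ω) with hξ
  have hξm : Measurable ξ := hWvm.prodMk hTm
  have hΦm : Measurable Φ := by
    have h1 : StronglyMeasurable (fun p : 𝒯 × Ω => φ (W p.2, p.1)) :=
      (hφm.comp ((hWm.comp measurable_snd).prodMk measurable_fst)).stronglyMeasurable
    have h2 := h1.integral_prod_right' (ν := μ)
    have h3 : Φ = fun t => ∫ ω, φ (W ω, t) ∂μ := funext hΦ
    rw [h3]; exact h2.measurable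
  set F : (Fin n → 𝒲) × 𝒯 → ℝ :=
    fun p => c * ∑ i, ((φ (p.1 i, p.2) - Φ p.2) - (φ0 (p.1 i) - c0)) with hF
  have hFm : Measurable F := by
    apply measurable_const.mul
    apply Finset.measurable_sum
    intro i _
    exact ((hφm.comp (((measurable_pi_apply i).comp measurable_fst).prodMk
      measurable_snd)).sub (hΦm.comp measurable_snd)).sub
      ((hφ0m.comp ((measurable_pi_apply i).comp measurable_fst)).sub measurable_const)
  have hSF : ∀ ω, S ω = F (ξ ω) := fun ω => hS ω
  have hSm : Measurable S := by
    have : S = fun ω => F (ξ ω) := funext hSF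
    rw [this]; exact hFm.comp hξm
  set ν' : Measure (Fin n → 𝒲) := μ.map Wv with hν'
  set τ : Measure 𝒯 := μ.map T with hτ
  haveI : IsProbabilityMeasure ν' := Measure.isProbabilityMeasure_map hWvm.aemeasurable
  haveI : IsProbabilityMeasure τ := Measure.isProbabilityMeasure_map hTm.aemeasurable
  have hprod : μ.map ξ = ν'.prod τ :=
    (indepFun_iff_map_prod_eq_prod_map_map hWvm.aemeasurable hTm.aemeasurable).1 hindep
  -- pointwise-in-t bound
  have htb : ∀ t : 𝒯, (∫⁻ ω, ENNReal.ofReal ((F (Wv ω, t)) ^ 2) ∂μ ≠ ⊤) →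
      ∫ ω, (F (Wv ω, t)) ^ 2 ∂μ ≤ r ^ 2 := by
    intro t hfin
    have hcpos : 0 < c := Real.rpow_pos_of_pos hnR _
    set ψ : 𝒲 → ℝ := fun w => φ (w, t) - φ0 w with hψdef
    have hψm : Measurable ψ :=
      (hφm.comp (measurable_id.prodMk measurable_const)).sub hφ0m
    set mt : ℝ := Φ t - c0 with hmt
    have hFe : ∀ ω, F (Wv ω, t) = c * ∑ i, (ψ (Ws i ω) - mt) := by
      intro ω
      simp only [hF, hWv]
      congr 1
      apply Finset.sum_congr rfl
      intro i _
      simp only [hψdef, hmt]; ring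
    have hGm : Measurable fun ω => ∑ i, (ψ (Ws i ω) - mt) :=
      Finset.measurable_sum _ fun i _ => (hψm.comp (hWsm i)).sub measurable_const
    have hfinG : ∫⁻ ω, ENNReal.ofReal ((∑ i, (ψ (Ws i ω) - mt)) ^ 2) ∂μ ≠ ⊤ := by
      intro hcon
      apply hfin
      have he : ∀ ω, ENNReal.ofReal ((F (Wv ω, t)) ^ 2)
          = ENNReal.ofReal (c ^ 2) * ENNReal.ofReal ((∑ i, (ψ (Ws i ω) - mt)) ^ 2) := by
        intro ω
        rw [hFe ω, mul_pow, ENNReal.ofReal_mul (sq_nonneg c)]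
      simp_rw [he]
      rw [lintegral_const_mul _ ((hGm.pow_const 2).ennreal_ofReal), hcon,
        ENNReal.mul_top (ENNReal.ofReal_pos.mpr (pow_pos hcpos 2)).ne']
    have hG2 : MemLp (fun ω => ∑ i, (ψ (Ws i ω) - mt)) 2 μ := by
      rw [memLp_two_iff_integrable_sq hGm.aestronglyMeasurable]
      refine ⟨(hGm.pow_const 2).aestronglyMeasurable, ?_⟩
      rw [hasFiniteIntegral_iff_ofReal (ae_of_all _ fun ω => sq_nonneg _)]
      exact lt_top_iff_ne_top.2 hfinG
    have hψW2 : MemLp (fun ω => ψ (W ω)) 2 μ :=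
      auxB hn hWm hWsm hiid hlaw hψm mt hG2
    have hmt' : mt = ∫ ω, ψ (W ω) ∂μ := by
      have hint1 : Integrable (fun ω => ψ (W ω)) μ := hψW2.integrable one_le_two
      have hint0 : Integrable (fun ω => φ0 (W ω)) μ := hφ0sq.integrable one_le_two
      have he : (fun ω => φ (W ω, t)) = fun ω => ψ (W ω) + φ0 (W ω) := by
        funext ω; simp [hψdef]
      rw [hmt, hΦ t, he, integral_add hint1 hint0, hc0]; ring
    have hb' : ∫ ω, (ψ (W ω)) ^ 2 ∂μ ≤ r ^ 2 := hbound t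
    have hkey := auxC hWm hWsm hiid hlaw hψm hψW2 hmt' hb'
    calc ∫ ω, (F (Wv ω, t)) ^ 2 ∂μ
        = ∫ ω, c ^ 2 * (∑ i, (ψ (Ws i ω) - mt)) ^ 2 ∂μ := by
          congr 1; funext ω; rw [hFe ω]; ring
      _ = c ^ 2 * ∫ ω, (∑ i, (ψ (Ws i ω) - mt)) ^ 2 ∂μ := integral_const_mul _ _
      _ ≤ c ^ 2 * ((n : ℝ) * r ^ 2) :=
          mul_le_mul_of_nonneg_left hkey (sq_nonneg c)
      _ = r ^ 2 := by rw [hc2]; field_simp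
  -- Fubini setup
  have hF2sm : StronglyMeasurable (fun p : (Fin n → 𝒲) × 𝒯 => (F p) ^ 2) :=
    (hFm.pow_const 2).stronglyMeasurable
  have hofm : Measurable fun p : (Fin n → 𝒲) × 𝒯 => ENNReal.ofReal ((F p) ^ 2) :=
    (hFm.pow_const 2).ennreal_ofReal
  set g : 𝒯 → ℝ := fun t => ∫ w, (F (w, t)) ^ 2 ∂ν' with hg
  have hgμ : ∀ t, g t = ∫ ω, (F (Wv ω, t)) ^ 2 ∂μ := by
    intro t
    have hmeas : AEStronglyMeasurable (fun w : Fin n → 𝒲 => (F (w, t)) ^ 2) (μ.map Wv) :=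
      ((hFm.comp (measurable_id.prodMk measurable_const)).pow_const 2).aestronglyMeasurable
    rw [hg, hν']
    exact integral_map hWvm.aemeasurable hmeas
  have hgm : Measurable g := (hF2sm.integral_prod_left' (μ := ν')).measurable
  have hF2prod : Integrable (fun p => (F p) ^ 2) (ν'.prod τ) := by
    rw [← hprod, integrable_map_measure hF2sm.aestronglyMeasurable hξm.aemeasurable]
    have he : ((fun p => (F p) ^ 2) ∘ ξ) = fun ω => (S ω) ^ 2 := by
      funext ω; simp [Function.comp, hSF ω]
    rw [he]; exact hint
  -- a.e. finiteness of sections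
  set Lν : 𝒯 → ENNReal := fun t => ∫⁻ w, ENNReal.ofReal ((F (w, t)) ^ 2) ∂ν' with hLν
  have hLνm : Measurable Lν := hofm.lintegral_prod_left'
  have hLνμ : ∀ t, Lν t = ∫⁻ ω, ENNReal.ofReal ((F (Wv ω, t)) ^ 2) ∂μ := by
    intro t
    have hmeas : Measurable (fun w : Fin n → 𝒲 => ENNReal.ofReal ((F (w, t)) ^ 2)) :=
      ((hFm.comp (measurable_id.prodMk measurable_const)).pow_const 2).ennreal_ofReal
    rw [hLν, hν']
    exact lintegral_map hmeas hWvm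
  have h1 : ∫⁻ ω, ENNReal.ofReal ((S ω) ^ 2) ∂μ ≠ ⊤ := by
    have := hint.2
    rw [hasFiniteIntegral_iff_ofReal (ae_of_all _ fun ω => sq_nonneg _)] at this
    exact this.ne
  have h2 : ∫⁻ ω, ENNReal.ofReal ((S ω) ^ 2) ∂μ = ∫⁻ t, Lν t ∂τ := by
    have e1 : ∫⁻ ω, ENNReal.ofReal ((S ω) ^ 2) ∂μ
        = ∫⁻ p, ENNReal.ofReal ((F p) ^ 2) ∂(μ.map ξ) := by
      rw [lintegral_map hofm hξm]
      congr 1; funext ω; rw [hSF ω]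
    rw [e1, hprod, lintegral_prod_symm' _ hofm]
  have h3 : ∀ᵐ t ∂τ, Lν t < ⊤ := ae_lt_top hLνm (h2 ▸ h1)
  have h4 : ∀ᵐ t ∂τ, g t ≤ r ^ 2 := by
    filter_upwards [h3] with t ht
    rw [hgμ t]
    exact htb t (by rw [← hLνμ t]; exact ht.ne)
  have h5 : ∀ᵐ ω ∂μ, g (T ω) ≤ r ^ 2 :=
    (ae_map_iff hTm.aemeasurable (measurableSet_le hgm measurable_const)).1 h4
  -- integrability of g ∘ T
  have hgτ : Integrable g τ := by
    have := hF2prod.integral_prod_right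
    exact this
  have hgT_int : Integrable (fun ω => g (T ω)) μ :=
    (integrable_map_measure hgm.aestronglyMeasurable hTm.aemeasurable).1 hgτ
  -- set-integral identity
  have hg_eq : ∀ s : Set Ω, MeasurableSet[MeasurableSpace.comap T inferInstance] s →
      μ s < ⊤ → ∫ ω in s, g (T ω) ∂μ = ∫ ω in s, (S ω) ^ 2 ∂μ := by
    rintro s ⟨B, hB, rfl⟩ -
    have hTB : MeasurableSet (T ⁻¹' B) := hTm hB
    set H : (Fin n → 𝒲) × 𝒯 → ℝ :=
      fun p => (F p) ^ 2 * Set.indicator B (fun _ => (1 : ℝ)) p.2 with hH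
    have hHm : Measurable H :=
      (hFm.pow_const 2).mul ((measurable_const.indicator hB).comp measurable_snd)
    have hHint : Integrable H (ν'.prod τ) := by
      refine hF2prod.mono hHm.aestronglyMeasurable (ae_of_all _ fun p => ?_)
      rw [Real.norm_eq_abs, Real.norm_eq_abs, abs_mul]
      have h01 : |Set.indicator B (fun _ => (1 : ℝ)) p.2| ≤ 1 := by
        by_cases h : p.2 ∈ B <;> simp [Set.indicator, h]
      calc |(F p) ^ 2| * |Set.indicator B (fun _ => (1 : ℝ)) p.2|
          ≤ |(F p) ^ 2| * 1 := mul_le_mul_of_nonneg_left h01 (abs_nonneg _)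
        _ = |(F p) ^ 2| := mul_one _
    have e0 : ∫ ω in T ⁻¹' B, (S ω) ^ 2 ∂μ = ∫ ω, H (ξ ω) ∂μ := by
      rw [← integral_indicator hTB]
      congr 1; funext ω
      by_cases h : T ω ∈ B <;>
        simp [hH, Set.indicator, h, hSF ω, hξ]
    have e1 : ∫ ω, H (ξ ω) ∂μ = ∫ p, H p ∂(ν'.prod τ) := by
      rw [← hprod, integral_map hξm.aemeasurable hHm.aestronglyMeasurable]
    have e2 : ∫ p, H p ∂(ν'.prod τ) = ∫ t, ∫ w, H (w, t) ∂ν' ∂τ :=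
      integral_prod_symm _ hHint
    have e3 : ∀ t, ∫ w, H (w, t) ∂ν' = Set.indicator B g t := by
      intro t
      by_cases h : t ∈ B
      · simp [hH, Set.indicator, h, hg]
      · simp [hH, Set.indicator, h]
    have e4 : ∫ t, Set.indicator B g t ∂τ = ∫ t in B, g t ∂τ := integral_indicator hB
    have e5 : ∫ t in B, g t ∂τ = ∫ ω in T ⁻¹' B, g (T ω) ∂μ := by
      rw [hτ, setIntegral_map hB hgm.aestronglyMeasurable hTm.aemeasurable]
    rw [e0, e1, e2]
    simp_rw [e3]
    rw [e4, e5]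
  have hgm' : AEStronglyMeasurable[MeasurableSpace.comap T inferInstance]
      (fun ω => g (T ω)) μ := by
    have hTc : @Measurable Ω 𝒯 (MeasurableSpace.comap T inferInstance) _ T :=
      Measurable.of_comap_le le_rfl
    exact (Measurable.stronglyMeasurable (hgm.comp hTc)).aestronglyMeasurable
  haveI : SigmaFinite (μ.trim hm_le) := by infer_instance
  have h6 : (fun ω => g (T ω)) =ᵐ[μ]
      μ[fun ω' => (S ω') ^ 2 | MeasurableSpace.comap T inferInstance] :=
    ae_eq_condExp_of_forall_setIntegral_eq hm_le hint
      (fun s _ _ => hgT_int.integrableOn) hg_eq hgm'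
  have hcond : ∀ᵐ ω ∂μ,
      (μ[fun ω' => (S ω') ^ 2 | MeasurableSpace.comap T inferInstance]) ω ≤ r ^ 2 := by
    filter_upwards [h5, h6] with ω hω heq
    rw [← heq]; exact hω
  refine ⟨hcond, ?_⟩
  have hic := integral_condExp (μ := μ) (f := fun ω' => (S ω') ^ 2) hm_le
  rw [← hic]
  calc ∫ ω, (μ[fun ω' => (S ω') ^ 2 | MeasurableSpace.comap T inferInstance]) ω ∂μ
      ≤ ∫ _x : Ω, r ^ 2 ∂μ := integral_mono_ae integrable_condExp (integrable_const _) hcond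
    _ = r ^ 2 := by simp
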